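/- Let r, s ∈ ℤ[1/2], m, n, k ∈ ℤ, and let x ∈ H with b·x·b⁻¹ = ι(0,k). Then the element w = b·ι(r,m)·b·x·b⁻¹·ι(s,n)·b⁻¹ of H lies in the image of ι if and only if r + 2^{m+k}·s ∈ ℤ and m + n + k = 0; and in that case w = ι(0, r + 2^{−n}·s). -/

import Mathlib

/-- The dyadic rationals `ℤ[1/2] = {p/2^q : p,q ∈ ℤ}`. -/
def IsDyadic (x : ℚ) : Prop := ∃ p : ℤ, ∃ q : ℕ, x = p / 2 ^ q

theorem IsDyadic.add {x y : ℚ} (hx : IsDyadic x) (hy : IsDyadic y) :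
    IsDyadic (x + y) := by
  obtain ⟨p, q, rfl⟩ := hx
  obtain ⟨p', q', rfl⟩ := hy
  refine ⟨p * 2 ^ q' + p' * 2 ^ q, q + q', ?_⟩
  have h2 : (2 : ℚ) ≠ 0 := two_ne_zero
  push_cast
  rw [pow_add]
  field_simp

theorem IsDyadic.neg {x : ℚ} (hx : IsDyadic x) : IsDyadic (-x) := by
  obtain ⟨p, q, rfl⟩ := hx
  exact ⟨-p, q, by push_cast; ring⟩

theorem IsDyadic.zpow_mul (m : ℤ) {x : ℚ} (hx : IsDyadic x) :
    IsDyadic ((2 : ℚ) ^ m * x) := by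
  obtain ⟨p, q, rfl⟩ := hx
  have h2 : (2 : ℚ) ≠ 0 := two_ne_zero
  rcases Int.eq_nat_or_neg m with ⟨a, rfl | rfl⟩
  · refine ⟨p * 2 ^ a, q, ?_⟩
    rw [zpow_natCast]
    push_cast
    field_simp
  · refine ⟨p, q + a, ?_⟩
    rw [zpow_neg, zpow_natCast, pow_add]
    field_simp

/-- The underlying set of `ℤ[1/2]`. -/
abbrev Dy : Type := {x : ℚ // IsDyadic x}

/-- The carrier `ℤ[1/2] × ℤ` of the Baumslag–Solitar group `BS(1,2) = ℤ[1/2] ⋊ ℤ`. -/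
def BS12 : Type := Dy × ℤ

/-- The group structure of the semidirect product `ℤ[1/2] ⋊ ℤ`, where `n ∈ ℤ` acts on
`ℤ[1/2]` by `x ↦ 2^n·x`: multiplication `(r,m)·(s,n) = (r + 2^m·s, m+n)`. -/
instance : Group BS12 where
  mul g h := (⟨g.1.1 + 2 ^ g.2 * h.1.1, g.1.2.add (IsDyadic.zpow_mul g.2 h.1.2)⟩,
    g.2 + h.2)
  one := (⟨0, 0, 0, by norm_num⟩, 0)
  inv g := (⟨-((2 : ℚ) ^ (-g.2) * g.1.1), (IsDyadic.zpow_mul (-g.2) g.1.2).neg⟩, -g.2)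
  mul_assoc g h k := by
    show Prod.mk _ _ = Prod.mk _ _
    have h2 : (2 : ℚ) ≠ 0 := two_ne_zero
    refine Prod.ext ?_ ?_
    · apply Subtype.ext
      show (g.1.1 + 2 ^ g.2 * h.1.1) + 2 ^ (g.2 + h.2) * k.1.1
        = g.1.1 + 2 ^ g.2 * (h.1.1 + 2 ^ h.2 * k.1.1)
      rw [zpow_add₀ h2]
      ring
    · show g.2 + h.2 + k.2 = g.2 + (h.2 + k.2)
      ring
  one_mul g := by
    show Prod.mk _ _ = g
    refine Prod.ext ?_ ?_
    · apply Subtype.ext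
      show (0 : ℚ) + 2 ^ (0 : ℤ) * g.1.1 = g.1.1
      simp
    · show (0 : ℤ) + g.2 = g.2
      simp
  mul_one g := by
    show Prod.mk _ _ = g
    refine Prod.ext ?_ ?_
    · apply Subtype.ext
      show g.1.1 + 2 ^ g.2 * (0 : ℚ) = g.1.1
      simp
    · show g.2 + (0 : ℤ) = g.2
      simp
  inv_mul_cancel g := by
    show Prod.mk _ _ = Prod.mk _ _
    refine Prod.ext ?_ ?_
    · apply Subtype.ext
      show -((2 : ℚ) ^ (-g.2) * g.1.1) + 2 ^ (-g.2) * g.1.1 = 0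
      ring
    · show -g.2 + g.2 = 0
      ring

/-- The element `(r, m)` of `ℤ[1/2] ⋊ ℤ`. -/
def BS12.mk (r : Dy) (m : ℤ) : BS12 := (r, m)

/-- `0 ∈ ℤ[1/2]`. -/
def Dy.zero : Dy := ⟨0, 0, 0, by norm_num⟩

/-- An integer, viewed as an element of `ℤ[1/2]`. -/
def Dy.ofInt (z : ℤ) : Dy := ⟨(z : ℚ), z, 0, by norm_num⟩

/-- The subgroup `A = {(q,0) : q ∈ ℤ}` of `ℤ[1/2] ⋊ ℤ`. -/
def subA : Subgroup BS12 where
  carrier := {g | (∃ z : ℤ, g.1.1 = (z : ℚ)) ∧ g.2 = 0}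
  one_mem' := ⟨⟨0, show (0 : ℚ) = ((0 : ℤ) : ℚ) by norm_num⟩, rfl⟩
  mul_mem' := by
    rintro g h ⟨⟨z1, hz1⟩, hg2⟩ ⟨⟨z2, hz2⟩, hh2⟩
    constructor
    · refine ⟨z1 + z2, ?_⟩
      show g.1.1 + 2 ^ g.2 * h.1.1 = ((z1 + z2 : ℤ) : ℚ)
      rw [hz1, hz2, hg2, zpow_zero]
      push_cast
      ring
    · show g.2 + h.2 = 0
      rw [hg2, hh2]
      ring
  inv_mem' := by
    rintro g ⟨⟨z, hz⟩, hg2⟩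
    constructor
    · refine ⟨-z, ?_⟩
      show -((2 : ℚ) ^ (-g.2) * g.1.1) = ((-z : ℤ) : ℚ)
      rw [hz, hg2]
      push_cast
      ring
    · show -g.2 = 0
      rw [hg2]
      ring

/-- The subgroup `B = {(0,k) : k ∈ ℤ}` of `ℤ[1/2] ⋊ ℤ`. -/
def subB : Subgroup BS12 where
  carrier := {g | g.1.1 = 0}
  one_mem' := show (0 : ℚ) = 0 from rfl
  mul_mem' := by
    intro g h hg hh
    show g.1.1 + 2 ^ g.2 * h.1.1 = 0
    rw [hg, hh]
    ring
  inv_mem' := by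
    intro g hg
    show -((2 : ℚ) ^ (-g.2) * g.1.1) = 0
    rw [hg]
    ring

/-- The isomorphism `φ : A → B`, `(q,0) ↦ (0,q)`. -/
def phiAB : subA ≃* subB where
  toFun g := ⟨(Dy.zero, g.1.1.1.num), rfl⟩
  invFun g := ⟨(Dy.ofInt g.1.2, 0), ⟨⟨g.1.2, rfl⟩, rfl⟩⟩
  left_inv g := by
    obtain ⟨⟨z, hz⟩, hg2⟩ := g.2
    apply Subtype.ext
    refine Prod.ext ?_ ?_
    · apply Subtype.ext
      show ((g.1.1.1.num : ℤ) : ℚ) = g.1.1.1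
      rw [hz, Rat.num_intCast]
    · exact hg2.symm
  right_inv g := by
    have hg : g.1.1.1 = 0 := g.2
    apply Subtype.ext
    refine Prod.ext ?_ ?_
    · apply Subtype.ext
      show (0 : ℚ) = g.1.1.1
      exact hg.symm
    · show (Dy.ofInt g.1.2).1.num = g.1.2
      show ((g.1.2 : ℤ) : ℚ).num = g.1.2
      rw [Rat.num_intCast]
  map_mul' g h := by
    obtain ⟨⟨z1, hz1⟩, hg2⟩ := g.2
    obtain ⟨⟨z2, hz2⟩, hh2⟩ := h.2
    apply Subtype.ext
    refine Prod.ext ?_ ?_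
    · apply Subtype.ext
      show (0 : ℚ) = (0 : ℚ) + 2 ^ ((g.1.1.1.num : ℤ)) * 0
      ring
    · show (g.1.1.1 + 2 ^ g.1.2 * h.1.1.1).num = g.1.1.1.num + h.1.1.1.num
      rw [hz1, hz2, hg2, zpow_zero, one_mul, ← Int.cast_add, Rat.num_intCast,
        Rat.num_intCast, Rat.num_intCast]

/-- The Baumslag group as the HNN extension `H = HNN(G, A, B, φ)` of
`G = ℤ[1/2] ⋊ ℤ`, with stable letter `b` satisfying `b·g·b⁻¹ = φ(g)` for `g ∈ A`. -/
abbrev BaumslagH : Type := HNNExtension BS12 subA subB phiAB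

/-- The stable letter `b` of the HNN extension. -/
def bH : BaumslagH := HNNExtension.t

/-- The canonical embedding `ι : G → H` of the base group. -/
def iH : BS12 →* BaumslagH := HNNExtension.of


/-- Let `r, s ∈ ℤ[1/2]`, `m, n, k ∈ ℤ`, and `x ∈ H` with
`b·x·b⁻¹ = ι(0,k)`.  Then `w = b·ι(r,m)·b·x·b⁻¹·ι(s,n)·b⁻¹` lies in the image of `ι`
iff `r + 2^{m+k}·s ∈ ℤ` and `m + n + k = 0`; and in that case
`w = ι(0, r + 2^{−n}·s)`. -/
theorem britton_case_bb (r s : Dy) (m n k : ℤ) (x : BaumslagH)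
    (hx : bH * x * bH⁻¹ = iH (BS12.mk Dy.zero k)) :
    ((∃ g : BS12,
        bH * iH (BS12.mk r m) * bH * x * bH⁻¹ * iH (BS12.mk s n) * bH⁻¹ = iH g)
      ↔ ((∃ z : ℤ, (r : ℚ) + 2 ^ (m + k) * (s : ℚ) = (z : ℚ)) ∧ m + n + k = 0))
    ∧ ∀ z : ℤ, ((z : ℚ) = (r : ℚ) + 2 ^ (-n) * (s : ℚ)) →
        ((∃ z' : ℤ, (r : ℚ) + 2 ^ (m + k) * (s : ℚ) = (z' : ℚ)) ∧ m + n + k = 0) →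
        bH * iH (BS12.mk r m) * bH * x * bH⁻¹ * iH (BS12.mk s n) * bH⁻¹
          = iH (BS12.mk Dy.zero z) := by
  -- First, reduce `b * ι(r,m) * b * x * b⁻¹ * ι(s,n) * b⁻¹` to `b * ι g₀ * b⁻¹`
  set g0 : BS12 := BS12.mk r m * BS12.mk Dy.zero k * BS12.mk s n with hg0
  have hw : bH * iH (BS12.mk r m) * bH * x * bH⁻¹ * iH (BS12.mk s n) * bH⁻¹
      = bH * iH g0 * bH⁻¹ := by
    have h1 : bH * iH (BS12.mk r m) * bH * x * bH⁻¹
        = bH * iH (BS12.mk r m) * (bH * x * bH⁻¹) := by group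
    rw [h1, hx, hg0, map_mul, map_mul]
    group
  have hfst : (g0.1 : ℚ) = (r : ℚ) + 2 ^ (m + k) * (s : ℚ) := by
    show ((r : ℚ) + 2 ^ m * (0:ℚ)) + 2 ^ (m + k) * (s : ℚ)
        = (r : ℚ) + 2 ^ (m + k) * (s : ℚ)
    ring
  have hsnd : g0.2 = m + k + n := rfl
  have memA_iff : g0 ∈ subA ↔
      ((∃ z : ℤ, (r : ℚ) + 2 ^ (m + k) * (s : ℚ) = (z : ℚ)) ∧ m + n + k = 0) := by
    constructor
    · rintro ⟨⟨z, hz⟩, h2⟩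
      exact ⟨⟨z, by rw [← hfst]; exact hz⟩, by omega⟩
    · rintro ⟨⟨z, hz⟩, h2⟩
      exact ⟨⟨z, by rw [hfst]; exact hz⟩, by omega⟩
  constructor
  · rw [hw]
    constructor
    · rintro ⟨g, hg⟩
      rw [← memA_iff]
      by_contra hA
      -- Britton's lemma: the reduced word `t * g0 * t⁻¹` cannot be in the base group
      let w : HNNExtension.NormalWord.ReducedWord BS12 subA subB :=
        { head := 1
          toList := [(1, g0), (-1, 1)]
          chain := by
            refine List.isChain_cons_cons.2 ⟨?_, List.isChain_singleton _⟩
            intro h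
            exact absurd h hA }
      have hprod : w.prod phiAB = bH * iH g0 * bH⁻¹ := by
        show HNNExtension.of (1 : BS12) *
          ([HNNExtension.t ^ ((1 : ℤˣ) : ℤ) * HNNExtension.of g0,
            HNNExtension.t ^ ((-1 : ℤˣ) : ℤ) * HNNExtension.of (1 : BS12)]).prod = _
        simp [bH, iH, mul_assoc]
      have := HNNExtension.ReducedWord.toList_eq_nil_of_mem_of_range phiAB w
        (by rw [hprod, hg]; exact ⟨g, rfl⟩)
      simp [w] at this
    · intro h
      have hA : g0 ∈ subA := memA_iff.2 h
      exact ⟨phiAB ⟨g0, hA⟩,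
        (HNNExtension.equiv_eq_conj (φ := phiAB) ⟨g0, hA⟩).symm⟩
  · rintro z hz ⟨⟨z', hz'⟩, h2⟩
    have hA : g0 ∈ subA := memA_iff.2 ⟨⟨z', hz'⟩, h2⟩
    rw [hw]
    have : bH * iH g0 * bH⁻¹ = iH (phiAB ⟨g0, hA⟩ : subB) :=
      (HNNExtension.equiv_eq_conj (φ := phiAB) ⟨g0, hA⟩).symm
    rw [this]
    congr 1
    -- `φ(g0) = (0, (g0.1).num)`; need `(g0.1).num = z`
    show (Dy.zero, (g0.1 : ℚ).num) = BS12.mk Dy.zero z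
    have hmk : m + k = -n := by omega
    have hval : (g0.1 : ℚ) = (z : ℚ) := by
      rw [hfst, hmk, ← hz]
    rw [hval, Rat.num_intCast]
    rfl
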